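/- arXiv:2106.08544 — 2 statements merged into one kernel-verified Lean document; each statement's English description precedes it below -/
import Mathlib

section
/- Let B ∈ ℂ^{n×d} and let ℓ_i = B_i (B*B)† B_i* be the leverage score of the i-th row B_i of B, where † denotes the Moore–Penrose pseudoinverse. Then for every i with ℓ_i > 0, (1/ℓ_i) · B_i* B_i ⪯ B*B in the Loewner order of Hermitian PSD matrices. -/
open Matrix
open scoped ComplexOrder

/-- If `M` is the Moore–Penrose pseudoinverse of `BᴴB` (characterized by the four Penrose
conditions) and `ℓ_i = B_i M B_iᴴ` is the leverage score of row `i`, then whenever `ℓ_i > 0`,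
`(1/ℓ_i) • B_iᴴ B_i ⪯ BᴴB` in the Loewner order. -/
theorem leverage_score_rank_one_bound (n d : ℕ)
    (B : Matrix (Fin n) (Fin d) ℂ) (M : Matrix (Fin d) (Fin d) ℂ)
    (h1 : Bᴴ * B * M * (Bᴴ * B) = Bᴴ * B)
    (h2 : M * (Bᴴ * B) * M = M)
    (h3 : (Bᴴ * B * M)ᴴ = Bᴴ * B * M)
    (h4 : (M * (Bᴴ * B))ᴴ = M * (Bᴴ * B))
    (ℓ : Fin n → ℂ) (hℓ : ∀ i, ℓ i = B i ⬝ᵥ (M *ᵥ star (B i)))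
    (i : Fin n)
    (hpos : 0 < (ℓ i).re)
    (hreal : (ℓ i).im = 0) :
    (Bᴴ * B - (ℓ i)⁻¹ • vecMulVec (star (B i)) (B i)).PosSemidef := by
  have hAH : (Bᴴ * B)ᴴ = Bᴴ * B := by
    simp [Matrix.conjTranspose_mul]
  -- conjugate transpose of h1
  have h1' : Bᴴ * B * (Mᴴ * (Bᴴ * B)) = Bᴴ * B := by
    have h := congrArg Matrix.conjTranspose h1
    simpa [Matrix.conjTranspose_mul, Matrix.mul_assoc] using h
  -- key identity : (BᴴB) M Bᴴ = Bᴴ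
  have hkey : Bᴴ * B * M * Bᴴ = Bᴴ := by
    rw [← sub_eq_zero, ← Matrix.self_mul_conjTranspose_eq_zero]
    have e : (Bᴴ * B * M * Bᴴ - Bᴴ) * (Bᴴ * B * M * Bᴴ - Bᴴ)ᴴ
        = Bᴴ * B * M * (Bᴴ * B) * Mᴴ * (Bᴴ * B) - Bᴴ * B * M * (Bᴴ * B)
          - Bᴴ * B * (Mᴴ * (Bᴴ * B)) + Bᴴ * B := by
      simp only [Matrix.conjTranspose_sub, Matrix.conjTranspose_mul,
        Matrix.conjTranspose_conjTranspose, Matrix.sub_mul, Matrix.mul_sub,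
        Matrix.mul_assoc]
      abel
    have h1'' : Bᴴ * B * Mᴴ * (Bᴴ * B) = Bᴴ * B := by
      rw [Matrix.mul_assoc]; exact h1'
    rw [e, h1, h1'', h1']
    abel
  set v : Fin d → ℂ := star (B i) with hv
  set y : Fin d → ℂ := M *ᵥ v with hy
  have hAy : (Bᴴ * B) *ᵥ y = v := by
    have hvcol : v = Bᴴ *ᵥ Pi.single i 1 := by
      funext j
      simp [Matrix.mulVec, dotProduct, Pi.single_apply, Matrix.conjTranspose_apply, hv]
    rw [hy, hvcol, Matrix.mulVec_mulVec, Matrix.mulVec_mulVec, hkey]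
  have hstarℓ : star (ℓ i) = ℓ i := by
    rw [Complex.star_def, Complex.conj_eq_iff_im]
    exact hreal
  have hℓne : ℓ i ≠ 0 := by
    intro h
    rw [h] at hpos
    simp at hpos
  have hA : (Bᴴ * B).PosSemidef := Matrix.posSemidef_conjTranspose_mul_self B
  refine Matrix.PosSemidef.of_dotProduct_mulVec_nonneg ?_ ?_
  · -- Hermitian
    have hWH : (vecMulVec v (B i))ᴴ = vecMulVec v (B i) := by
      ext j k
      simp [Matrix.conjTranspose_apply, Matrix.vecMulVec_apply, hv, mul_comm]
    show _ = _
    rw [Matrix.conjTranspose_sub, Matrix.conjTranspose_smul, hWH, hAH, star_inv₀, hstarℓ]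
  · intro x
    set s : ℂ := B i ⬝ᵥ x with hs
    have hxv : star x ⬝ᵥ v = star s := by
      simp only [hv, hs, dotProduct, star_sum, star_mul']
      refine Finset.sum_congr rfl fun j _ => ?_
      simp [mul_comm]
    have hys : star y ⬝ᵥ ((Bᴴ * B) *ᵥ x) = s := by
      rw [Matrix.dotProduct_mulVec]
      have : star y ᵥ* (Bᴴ * B) = star v := by
        rw [← hAH, ← Matrix.star_mulVec, hAy]
      rw [this, hv, star_star]
    have hyy : star y ⬝ᵥ v = ℓ i := by
      have : star y ⬝ᵥ v = star (star v ⬝ᵥ y) := by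
        simp only [dotProduct, star_sum, star_mul', star_star]
        refine Finset.sum_congr rfl fun j _ => ?_
        simp [mul_comm]
      rw [this, hv, star_star, ← hℓ i, hstarℓ]
    set t : ℂ := s * (ℓ i)⁻¹ with ht
    set z : Fin d → ℂ := x - t • y with hz
    have hW : vecMulVec v (B i) *ᵥ x = s • v := by
      funext j
      simp only [Matrix.mulVec, Matrix.vecMulVec_apply, dotProduct, Pi.smul_apply,
        smul_eq_mul, hs]
      rw [Finset.sum_mul]
      exact Finset.sum_congr rfl fun k _ => by ring
    have expand : star z ⬝ᵥ ((Bᴴ * B) *ᵥ z)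
        = star x ⬝ᵥ ((Bᴴ * B) *ᵥ x) - (ℓ i)⁻¹ * (s * star s) := by
      have hstart : star t = star s * (ℓ i)⁻¹ := by
        rw [ht, star_mul', star_inv₀, hstarℓ, mul_comm]
      rw [hz]
      rw [star_sub, star_smul, Matrix.mulVec_sub, Matrix.mulVec_smul, hAy]
      rw [sub_dotProduct, dotProduct_sub, dotProduct_sub,
        smul_dotProduct, dotProduct_smul, dotProduct_smul,
        smul_dotProduct]
      simp only [smul_eq_mul, hys, hxv, hyy, hstart]
      field_simp
      ring
    have goalEq : star x ⬝ᵥ ((Bᴴ * B - (ℓ i)⁻¹ • vecMulVec v (B i)) *ᵥ x)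
        = star z ⬝ᵥ ((Bᴴ * B) *ᵥ z) := by
      rw [expand, Matrix.sub_mulVec, Matrix.smul_mulVec, hW,
        dotProduct_sub, dotProduct_smul, dotProduct_smul]
      simp only [smul_eq_mul, hxv]
    rw [goalEq]
    exact hA.dotProduct_mulVec_nonneg z
end

section
/- There exist a diagonal matrix A = diag(a₁, a₂) with 1 = a₁ > a₂ > 0 and diagonal D = diag(d₁, d₂) with |d₁| = 1 < |d₂| such that the ratio ‖A‖·‖DA‖ / ‖D^{1/2}A‖² is at least any prescribed constant C > 1; concretely, taking a₂² = 1/|d₂| gives ‖D^{1/2}A‖² = 1 while ‖A‖·‖DA‖ = |d₂|^{1/2}. -/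
/-- Sampling by `(A, DA)` scores can be arbitrarily worse than sampling by `D^{1/2}A`:
for any `C > 1` there are diagonal matrices `A = diag(1, a₂)` with `1 > a₂ > 0` and
`D = diag(1, d₂)` with `|d₂| > 1` and `a₂² = 1/|d₂|` such that
`‖D^{1/2}A‖² = max{|d₁|a₁², |d₂|a₂²} = 1` while
`‖A‖·‖DA‖ = max{a₁,a₂}·max{|d₁|a₁, |d₂|a₂} = |d₂|^{1/2}`, so the ratio is at least `C`. -/
theorem separate_sampling_arbitrarily_worse :
    ∀ C : ℝ, 1 < C → ∃ a₂ d₂ : ℝ, 0 < a₂ ∧ a₂ < 1 ∧ 1 < |d₂| ∧ a₂ ^ 2 = 1 / |d₂| ∧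
      max (|(1 : ℝ)| * 1 ^ 2) (|d₂| * a₂ ^ 2) = 1 ∧
      max 1 a₂ * max (|(1 : ℝ)| * 1) (|d₂| * a₂) = |d₂| ^ ((1 : ℝ) / 2) ∧
      C ≤ (max 1 a₂ * max (|(1 : ℝ)| * 1) (|d₂| * a₂)) /
            max (|(1 : ℝ)| * 1 ^ 2) (|d₂| * a₂ ^ 2) := by
  intro C hC
  have hC0 : (0 : ℝ) < C := lt_trans one_pos hC
  have habs : |C ^ 2| = C ^ 2 := abs_of_pos (by positivity)
  have ha2 : (1 : ℝ) / C < 1 := (div_lt_one hC0).mpr hC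
  have h0 : C ^ 2 * (1 / C) ^ 2 = 1 := by field_simp
  have h1 : C ^ 2 * (1 / C) = C := by field_simp
  have h2 : ((C : ℝ) ^ 2) ^ ((1 : ℝ) / 2) = C := by
    rw [← Real.rpow_natCast C 2, ← Real.rpow_mul hC0.le]
    norm_num
  refine ⟨1 / C, C ^ 2, by positivity, ha2, ?_, ?_, ?_, ?_, ?_⟩
  · rw [habs]; nlinarith
  · rw [habs]; field_simp
  · rw [habs, h0]; simp
  · rw [habs, h1, h2, max_eq_left ha2.le]
    simp [max_eq_right hC.le]
  · rw [habs, h0, h1, max_eq_left ha2.le]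
    simp [max_eq_right hC.le]
end
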